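/- Let W ∈ ℝ^{n×n} be entrywise nonnegative with spectral norm ‖W‖ ≤ 1, and let ℓ > 0 be an integer. Let L_W = I_n − W and L_C = I_{ℓn} − C_ℓ ⊗ W. Suppose B_C ∈ ℝ^{ℓn×ℓn} satisfies (I_{ℓn} − B_C L_C)^⊤ U_{L_C} (I_{ℓn} − B_C L_C) ⪯ δ²·U_{L_C}. Then B_W = (1/ℓ)·(1_ℓ ⊗ I_n)^⊤ B_C (1_ℓ ⊗ I_n) satisfies (I_n − B_W L_W)^⊤ U_{L_W} (I_n − B_W L_W) ⪯ δ²·U_{L_W}. -/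

import Mathlib

open Matrix Kronecker

noncomputable section

/-- The symmetrization `U_A = (A + Aᵀ)/2` of a real square matrix. -/
def rsym {m : Type*} [Fintype m] (A : Matrix m m ℝ) : Matrix m m ℝ :=
  (1 / 2 : ℝ) • (A + Aᵀ)

/-- Transition matrix of the directed `l`-cycle: `(C_l)_{ij} = 1` iff `i ≡ j+1 (mod l)`. -/
def cycleR (l : ℕ) : Matrix (Fin l) (Fin l) ℝ :=
  Matrix.of fun i j => if (i : ℕ) = ((j : ℕ) + 1) % l then 1 else 0

/-- The `ln × n` matrix `1_l ⊗ I_n` (all-ones vector tensored with the identity). -/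
def onesLift (l n : ℕ) : Matrix (Fin l × Fin n) (Fin n) ℝ :=
  Matrix.of fun p j => if p.2 = j then 1 else 0

set_option linter.unusedSectionVars false
set_option linter.unusedVariables false

section Aux
variable {l n : ℕ} [NeZero l]

lemma cycle_cond (i j : Fin l) : ((i : ℕ) = ((j : ℕ) + 1) % l) ↔ j = i - 1 := by
  have h1 : ((j : ℕ) + 1) % l = ((j + 1 : Fin l) : ℕ) := by
    rw [Fin.add_def, Fin.val_one']
    conv_lhs => rw [Nat.add_mod, Nat.mod_eq_of_lt j.isLt]
  rw [h1]
  constructor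
  · intro h
    have : i = j + 1 := Fin.ext h
    rw [this]; simp
  · intro h
    have : i = j + 1 := by rw [h]; simp
    exact congrArg Fin.val this

lemma cycleR_eq (i j : Fin l) : cycleR l i j = if j = i - 1 then (1:ℝ) else 0 := by
  simp [cycleR, cycle_cond]

variable (W : Matrix (Fin n) (Fin n) ℝ)

lemma kron_mul_onesLift : (cycleR l ⊗ₖ W) * onesLift l n = onesLift l n * W := by
  ext ⟨i, a⟩ b
  simp [Matrix.mul_apply, onesLift, cycleR_eq, Fintype.sum_prod_type, mul_ite, ite_mul]

lemma onesLiftT_mul_kron : (onesLift l n)ᵀ * (cycleR l ⊗ₖ W) = W * (onesLift l n)ᵀ := by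
  ext a ⟨j, b⟩
  have hcond : ∀ i : Fin l, (j = i - 1) ↔ (i = j + 1) := by
    intro i; constructor <;> intro h <;> (rw [h]; simp)
  simp [Matrix.mul_apply, onesLift, cycleR_eq, Fintype.sum_prod_type, mul_ite, ite_mul, hcond]

lemma onesLiftT_mul_onesLift : (onesLift l n)ᵀ * onesLift l n = (l : ℝ) • 1 := by
  ext a b
  simp [Matrix.mul_apply, onesLift, Fintype.sum_prod_type, Matrix.one_apply, mul_ite, ite_mul]
  by_cases h : a = b <;> simp [h, eq_comm]

lemma kron_mulVec (v : Fin l × Fin n → ℝ) (i : Fin l) (a : Fin n) :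
    ((cycleR l ⊗ₖ W) *ᵥ v) (i, a) = (W *ᵥ fun b => v (i - 1, b)) a := by
  simp [Matrix.mulVec, dotProduct, cycleR_eq, Fintype.sum_prod_type, mul_ite, ite_mul,
    mul_assoc]

lemma rsym_transpose {m : Type*} [Fintype m] (A : Matrix m m ℝ) : (rsym A)ᵀ = rsym A := by
  simp [rsym, transpose_add, add_comm]

lemma rsym_isHermitian {m : Type*} [Fintype m] (A : Matrix m m ℝ) : (rsym A).IsHermitian := by
  unfold Matrix.IsHermitian
  rw [show (rsym A)ᴴ = (rsym A)ᵀ by ext i j; simp [Matrix.conjTranspose_apply]]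
  exact rsym_transpose A

lemma rsym_quadform {m : Type*} [Fintype m] (A : Matrix m m ℝ) (v : m → ℝ) :
    v ⬝ᵥ (rsym A *ᵥ v) = v ⬝ᵥ (A *ᵥ v) := by
  have ht : v ⬝ᵥ (Aᵀ *ᵥ v) = v ⬝ᵥ (A *ᵥ v) := by
    rw [Matrix.dotProduct_mulVec, Matrix.vecMul_transpose, dotProduct_comm]
  simp [rsym, Matrix.add_mulVec, Matrix.smul_mulVec, dotProduct_add, dotProduct_smul, ht]
  ring

lemma uc_psd
    (hWnorm : ∀ v : Fin n → ℝ,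
      Real.sqrt (∑ i, ((W *ᵥ v) i) ^ 2) ≤ Real.sqrt (∑ i, (v i) ^ 2)) :
    (rsym ((1 : Matrix (Fin l × Fin n) (Fin l × Fin n) ℝ) - cycleR l ⊗ₖ W)).PosSemidef := by
  refine .of_dotProduct_mulVec_nonneg (rsym_isHermitian _) fun v => ?_
  have hsv : star v = v := by simp
  rw [hsv, rsym_quadform, Matrix.sub_mulVec, Matrix.one_mulVec, dotProduct_sub, sub_nonneg]
  set u := (cycleR l ⊗ₖ W) *ᵥ v with hu
  have husq : ∑ p, (u p) ^ 2 ≤ ∑ p, (v p) ^ 2 := by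
    rw [Fintype.sum_prod_type, Fintype.sum_prod_type]
    have h1 : ∀ i : Fin l, ∑ a, (u (i, a)) ^ 2 ≤ ∑ a, (v (i - 1, a)) ^ 2 := by
      intro i
      have h2 := hWnorm (fun b => v (i - 1, b))
      have h3 : ∀ x y : ℝ, 0 ≤ x → 0 ≤ y → Real.sqrt x ≤ Real.sqrt y → x ≤ y := by
        intro x y hx hy h
        calc x = Real.sqrt x ^ 2 := (Real.sq_sqrt hx).symm
          _ ≤ Real.sqrt y ^ 2 := by
              exact pow_le_pow_left₀ (Real.sqrt_nonneg _) h 2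
          _ = y := Real.sq_sqrt hy
      have h4 := h3 _ _ (Finset.sum_nonneg fun a _ => sq_nonneg _)
        (Finset.sum_nonneg fun a _ => sq_nonneg _) h2
      calc ∑ a, (u (i, a)) ^ 2 = ∑ a, ((W *ᵥ fun b => v (i - 1, b)) a) ^ 2 := by
            simp only [hu, kron_mulVec]
        _ ≤ ∑ a, (v (i - 1, a)) ^ 2 := h4
    calc ∑ i, ∑ a, (u (i, a)) ^ 2 ≤ ∑ i, ∑ a, (v (i - 1, a)) ^ 2 :=
          Finset.sum_le_sum fun i _ => h1 i
      _ = ∑ i, ∑ a, (v (i, a)) ^ 2 :=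
          Equiv.sum_comp (Equiv.subRight (1 : Fin l)) (fun i => ∑ a, (v (i, a)) ^ 2)
  have hcs := Real.sum_mul_le_sqrt_mul_sqrt Finset.univ v u
  have hs1 : Real.sqrt (∑ p, (u p) ^ 2) ≤ Real.sqrt (∑ p, (v p) ^ 2) :=
    Real.sqrt_le_sqrt husq
  have hvv : v ⬝ᵥ v = ∑ p, (v p) ^ 2 := by simp [dotProduct, sq]
  have : v ⬝ᵥ u ≤ ∑ p, (v p) ^ 2 := by
    calc v ⬝ᵥ u = ∑ p, v p * u p := rfl
      _ ≤ Real.sqrt (∑ p, (v p) ^ 2) * Real.sqrt (∑ p, (u p) ^ 2) := hcs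
      _ ≤ Real.sqrt (∑ p, (v p) ^ 2) * Real.sqrt (∑ p, (v p) ^ 2) := by
          exact mul_le_mul_of_nonneg_left hs1 (Real.sqrt_nonneg _)
      _ = ∑ p, (v p) ^ 2 := Real.mul_self_sqrt (Finset.sum_nonneg fun p _ => sq_nonneg _)
  rw [hvv]; exact this

lemma psd_smul' {m : Type*} [Fintype m] {M : Matrix m m ℝ} (h : M.PosSemidef) {c : ℝ}
    (hc : 0 ≤ c) : (c • M).PosSemidef := by
  refine .of_dotProduct_mulVec_nonneg ?_ fun x => ?_
  · have := h.1
    unfold Matrix.IsHermitian at *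
    rw [Matrix.conjTranspose_smul]
    rw [this]
    congr 1
  · rw [Matrix.smul_mulVec, dotProduct_smul]
    exact mul_nonneg hc (by simpa using h.dotProduct_mulVec_nonneg x)

lemma conjT_eq_transpose {m k : Type*} [Fintype m] [Fintype k] (A : Matrix m k ℝ) : Aᴴ = Aᵀ := by
  ext i j; simp [Matrix.conjTranspose_apply]

lemma assembly {m k : Type*} [Fintype m] [Fintype k] [DecidableEq k]
    (lp δ2 : ℝ) (hlp : 0 < lp)
    (P : Matrix m k ℝ) (M UC : Matrix m m ℝ) (U N : Matrix k k ℝ)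
    (hPP : Pᵀ * P = lp • 1)
    (hUCP : UC * P = P * U) (hPUC : Pᵀ * UC = U * Pᵀ)
    (hUC : UC.PosSemidef)
    (hH : (δ2 • UC - Mᵀ * UC * M).PosSemidef)
    (hN : N = lp⁻¹ • (Pᵀ * (M * P))) :
    (δ2 • U - Nᵀ * U * N).PosSemidef := by
  have hc : lp⁻¹ * lp = 1 := inv_mul_cancel₀ hlp.ne'
  set c : ℝ := lp⁻¹ with hcdef
  have hc0 : 0 ≤ c := by positivity
  set X : Matrix m k ℝ := M * P with hX
  set Y : Matrix m k ℝ := X - c • (P * (Pᵀ * X)) with hY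
  -- helper identities with trailing factor
  have hPP' : ∀ R : Matrix k k ℝ, Pᵀ * (P * R) = lp • R := by
    intro R; rw [← Matrix.mul_assoc, hPP, Matrix.smul_mul, one_mul]
  have hUCP' : ∀ R : Matrix k k ℝ, UC * (P * R) = P * (U * R) := by
    intro R; rw [← Matrix.mul_assoc, hUCP, Matrix.mul_assoc]
  have hPUC' : ∀ R : Matrix m k ℝ, Pᵀ * (UC * R) = U * (Pᵀ * R) := by
    intro R; rw [← Matrix.mul_assoc, hPUC, Matrix.mul_assoc]
  have hA : (c • (Pᵀ * (δ2 • UC - Mᵀ * UC * M) * P)).PosSemidef := by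
    have := hH.conjTranspose_mul_mul_same P
    rw [conjT_eq_transpose] at this
    exact psd_smul' this hc0
  have hB : (c • (Yᵀ * UC * Y)).PosSemidef := by
    have := hUC.conjTranspose_mul_mul_same Y
    rw [conjT_eq_transpose] at this
    exact psd_smul' this hc0
  have hsum := hA.add hB
  have key : δ2 • U - Nᵀ * U * N =
      c • (Pᵀ * (δ2 • UC - Mᵀ * UC * M) * P) + c • (Yᵀ * UC * Y) := by
    have hZ1 : Pᵀ * (UC * P) = lp • U := by
      rw [hUCP, hPP' U]
    have hXt' : ∀ R : Matrix m k ℝ, Pᵀ * (Mᵀ * R) = Xᵀ * R := by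
      intro R; rw [hX, Matrix.transpose_mul, Matrix.mul_assoc]
    rw [hN, hY]
    simp only [Matrix.transpose_smul, Matrix.transpose_mul, Matrix.transpose_sub,
      Matrix.transpose_transpose, Matrix.mul_sub, Matrix.sub_mul, Matrix.mul_smul,
      Matrix.smul_mul, smul_sub, Matrix.mul_assoc, smul_smul, hPP', hUCP', hPUC', hZ1,
      ← hX, hXt', hPP, mul_one]
    match_scalars <;> (simp only [hcdef]; field_simp; try ring)
  rw [key]; exact hsum

lemma kronT_mul_onesLift : (cycleR l ⊗ₖ W)ᵀ * onesLift l n = onesLift l n * Wᵀ := by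
  have h := congrArg Matrix.transpose (onesLiftT_mul_kron (l := l) W)
  simpa [Matrix.transpose_mul] using h

lemma uc_mul_onesLift :
    rsym (1 - cycleR l ⊗ₖ W) * onesLift l n = onesLift l n * rsym (1 - W) := by
  unfold rsym
  simp only [Matrix.smul_mul, Matrix.mul_smul, Matrix.add_mul, Matrix.mul_add,
    Matrix.sub_mul, Matrix.mul_sub, Matrix.transpose_sub, Matrix.transpose_one,
    Matrix.one_mul, Matrix.mul_one, kron_mul_onesLift, kronT_mul_onesLift]

lemma onesLiftT_mul_uc :
    (onesLift l n)ᵀ * rsym (1 - cycleR l ⊗ₖ W) = rsym (1 - W) * (onesLift l n)ᵀ := by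
  have h := congrArg Matrix.transpose (uc_mul_onesLift (l := l) W)
  simpa [Matrix.transpose_mul, rsym_transpose] using h

end Aux

/-- Projecting an approximate pseudoinverse of the cycle-lifted
Laplacian `L_C = I − C_l ⊗ W` yields an approximate pseudoinverse of
`L_W = I − W`: if `(I − B_C L_C)ᵀ U_{L_C} (I − B_C L_C) ⪯ δ² U_{L_C}`, then
`B_W = (1/l)(1_l ⊗ I_n)ᵀ B_C (1_l ⊗ I_n)` satisfies
`(I − B_W L_W)ᵀ U_{L_W} (I − B_W L_W) ⪯ δ² U_{L_W}`. -/
theorem cycle_lift_pseudoinverse_projection {n : ℕ} (l : ℕ) (hl : 0 < l) (δ : ℝ)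
    (W : Matrix (Fin n) (Fin n) ℝ) (hWnn : ∀ i j, 0 ≤ W i j)
    (hWnorm : ∀ v : Fin n → ℝ,
      Real.sqrt (∑ i, ((W *ᵥ v) i) ^ 2) ≤ Real.sqrt (∑ i, (v i) ^ 2))
    (BC : Matrix (Fin l × Fin n) (Fin l × Fin n) ℝ)
    (hBC : (δ ^ 2 • rsym (1 - cycleR l ⊗ₖ W) -
        (1 - BC * (1 - cycleR l ⊗ₖ W))ᵀ * rsym (1 - cycleR l ⊗ₖ W) *
          (1 - BC * (1 - cycleR l ⊗ₖ W))).PosSemidef) :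
    (δ ^ 2 • rsym (1 - W) -
        (1 - ((1 / (l : ℝ)) • ((onesLift l n)ᵀ * BC * onesLift l n)) * (1 - W))ᵀ *
          rsym (1 - W) *
          (1 - ((1 / (l : ℝ)) • ((onesLift l n)ᵀ * BC * onesLift l n)) * (1 - W))).PosSemidef := by
  haveI : NeZero l := ⟨hl.ne'⟩
  have hlp : (0 : ℝ) < (l : ℝ) := by exact_mod_cast hl
  set P := onesLift l n with hPdef
  set K := cycleR l ⊗ₖ W with hKdef
  set M := (1 : Matrix (Fin l × Fin n) (Fin l × Fin n) ℝ) - BC * (1 - K) with hMdef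
  have hlne : (l : ℝ) ≠ 0 := hlp.ne'
  have hN : (1 : Matrix (Fin n) (Fin n) ℝ) -
      ((1 / (l : ℝ)) • (Pᵀ * BC * P)) * (1 - W) = (l : ℝ)⁻¹ • (Pᵀ * (M * P)) := by
    have hLC : (1 - K) * P = P * (1 - W) := by
      rw [Matrix.sub_mul, Matrix.mul_sub, Matrix.one_mul, Matrix.mul_one, hKdef,
        kron_mul_onesLift]
    have hPP : Pᵀ * P = (l : ℝ) • 1 := onesLiftT_mul_onesLift
    have hMP : M * P = P - BC * (P * (1 - W)) := by
      rw [hMdef, Matrix.sub_mul, Matrix.one_mul, Matrix.mul_assoc, hLC]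
    conv_rhs => rw [hMP, Matrix.mul_sub, hPP, smul_sub, smul_smul, inv_mul_cancel₀ hlne,
      one_smul, ← Matrix.mul_assoc, ← Matrix.mul_assoc, ← Matrix.smul_mul, ← one_div]
  rw [hN]
  exact assembly (l : ℝ) (δ ^ 2) hlp P M (rsym (1 - K)) (rsym (1 - W)) _
    (onesLiftT_mul_onesLift) (uc_mul_onesLift W) (onesLiftT_mul_uc W)
    (uc_psd W hWnorm) hBC rfl

end
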